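/- For any two elements x, y of an abelian group G, the symmetric reflection space generated by {x, y} equals (2⟨x, y⟩ + x) ∪ (2⟨x, y⟩ + y), where ⟨x, y⟩ is the subgroup generated by x and y. -/

import Mathlib

/-- The symmetric reflection space generated by a subset `A`: the smallest subset of `G`
containing `A` closed under `(a, b) ↦ a - 2b`. -/
def symReflGen {G : Type*} [AddCommGroup G] (A : Set G) : Set G :=
  ⋂₀ {B : Set G | A ⊆ B ∧ ∀ a ∈ B, ∀ b ∈ B, a - 2 • b ∈ B}

theorem symReflGen_pair_cosets {G : Type*} [AddCommGroup G] (x y : G) :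
    symReflGen {x, y} =
      {g : G | ∃ s ∈ AddSubgroup.closure ({x, y} : Set G), g = 2 • s + x} ∪
        {g : G | ∃ s ∈ AddSubgroup.closure ({x, y} : Set G), g = 2 • s + y} := by
  have hmem : ∀ v ∈ ({x, y} : Set G), v ∈ symReflGen {x, y} := by
    intro v hv B hB; exact hB.1 hv
  have hop : ∀ a ∈ symReflGen {x, y}, ∀ b ∈ symReflGen {x, y},
      a - 2 • b ∈ symReflGen {x, y} := by
    intro a ha b hb B hB; exact hB.2 a (ha B hB) b (hb B hB)
  set T := symReflGen ({x, y} : Set G) with hT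
  have hx : x ∈ T := hmem x (by simp)
  have hy : y ∈ T := hmem y (by simp)
  have hneg : ∀ t ∈ T, -t ∈ T := by
    intro t ht
    have h := hop t ht t ht
    have : t - 2 • t = -t := by abel
    rwa [this] at h
  have key : ∀ s ∈ AddSubgroup.closure ({x, y} : Set G), ∀ t ∈ T, t + 2 • s ∈ T := by
    intro s hs
    induction hs using AddSubgroup.closure_induction with
    | mem v hv =>
      intro t ht
      have h := hop t ht (-v) (hneg v (hmem v hv))
      have : t - 2 • (-v) = t + 2 • v := by abel
      rwa [this] at h
    | zero =>
      intro t ht; simpa using ht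
    | add a b _ _ ha hb =>
      intro t ht
      have h := hb (t + 2 • a) (ha t ht)
      have : t + 2 • a + 2 • b = t + 2 • (a + b) := by abel
      rwa [this] at h
    | neg a _ ha =>
      intro t ht
      have h := hneg _ (ha (-t) (hneg t ht))
      have : -(-t + 2 • a) = t + 2 • (-a) := by abel
      rwa [this] at h
  apply Set.Subset.antisymm
  · intro g hg
    apply hg
    constructor
    · intro v hv
      rcases hv with rfl | hv
      · exact Or.inl ⟨0, (AddSubgroup.closure ({v, y} : Set G)).zero_mem, by simp⟩
      · rcases hv with rfl
        exact Or.inr ⟨0, (AddSubgroup.closure ({x, v} : Set G)).zero_mem, by simp⟩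
    · rintro a (⟨s, hs, rfl⟩ | ⟨s, hs, rfl⟩) b (⟨t, ht, rfl⟩ | ⟨t, ht, rfl⟩)
      · exact Or.inl ⟨s - 2 • t - x, by
          refine sub_mem (sub_mem hs (AddSubgroup.nsmul_mem _ ht 2)) ?_
          · exact AddSubgroup.subset_closure (by simp), by abel⟩
      · exact Or.inl ⟨s - 2 • t - y, by
          refine sub_mem (sub_mem hs (AddSubgroup.nsmul_mem _ ht 2)) ?_
          · exact AddSubgroup.subset_closure (by simp), by abel⟩
      · exact Or.inr ⟨s - 2 • t - x, by
          refine sub_mem (sub_mem hs (AddSubgroup.nsmul_mem _ ht 2)) ?_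
          · exact AddSubgroup.subset_closure (by simp), by abel⟩
      · exact Or.inr ⟨s - 2 • t - y, by
          refine sub_mem (sub_mem hs (AddSubgroup.nsmul_mem _ ht 2)) ?_
          · exact AddSubgroup.subset_closure (by simp), by abel⟩
  · rintro g (⟨s, hs, rfl⟩ | ⟨s, hs, rfl⟩)
    · have h := key s hs x hx
      have : x + 2 • s = 2 • s + x := by abel
      rwa [this] at h
    · have h := key s hs y hy
      have : y + 2 • s = 2 • s + y := by abel
      rwa [this] at h
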